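/- Let q ≡ 1 (mod 4) be a prime power, i ∈ F_q with i² = -1, and let G = PSL(2,q) act on P = (F_q² \ {0})/⟨i⟩. The stabilizer of the point [(1,0)] has order 2q, and hence the orbit of [(1,0)] has size (q²-1)/4; in particular G acts transitively on P. -/

import Mathlib

open Matrix MulAction Pointwise

abbrev SL2 (F : Type) [Field F] := Matrix.SpecialLinearGroup (Fin 2) F

abbrev PSL2 (F : Type) [Field F] := SL2 F ⧸ Subgroup.center (SL2 F)

/-- Nonzero vectors of `F²`. -/
def Vec (F : Type) [Field F] := {v : Fin 2 → F // v ≠ 0}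

/-- Two nonzero vectors are related if they differ by multiplication by a power of `i`. -/
def vrel (F : Type) [Field F] (i : F) (v w : Vec F) : Prop :=
  ∃ n : ℕ, (w.1 : Fin 2 → F) = i ^ n • v.1

/-- The point set `P = (F² \ {0})/⟨i⟩`. -/
def Pts (F : Type) [Field F] (i : F) := Quot (vrel F i)

/-- The class of a nonzero vector in `P`. -/
def mkPt (F : Type) [Field F] (i : F) (v : Fin 2 → F) (hv : v ≠ 0) : Pts F i :=
  Quot.mk _ ⟨v, hv⟩

lemma vec_fst_ne_zero {F : Type} [Field F] (b : F) : ![(1 : F), b] ≠ 0 := by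
  intro h
  simpa using congrFun h 0

lemma vec_snd_ne_zero {F : Type} [Field F] (a : F) : ![a, (1 : F)] ≠ 0 := by
  intro h
  simpa using congrFun h 1

/-- `SL(2,q)` acts on nonzero vectors. -/
def slVecSMul {F : Type} [Field F] (A : SL2 F) (v : Vec F) : Vec F :=
  ⟨(A : Matrix (Fin 2) (Fin 2) F) *ᵥ v.1, by
    intro h
    apply v.2
    have h2 : ((A⁻¹ : SL2 F) : Matrix (Fin 2) (Fin 2) F) *ᵥ
        ((A : Matrix (Fin 2) (Fin 2) F) *ᵥ v.1) = 0 := by rw [h, Matrix.mulVec_zero]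
    rwa [Matrix.mulVec_mulVec, ← Matrix.SpecialLinearGroup.coe_mul, inv_mul_cancel,
      Matrix.SpecialLinearGroup.coe_one, Matrix.one_mulVec] at h2⟩

instance (F : Type) [Field F] (i : F) : SMul (SL2 F) (Pts F i) :=
  ⟨fun A => Quot.map (slVecSMul A) (by
    rintro v w ⟨n, hn⟩
    exact ⟨n, by simp [slVecSMul, hn, Matrix.mulVec_smul]⟩)⟩

instance (F : Type) [Field F] (i : F) : MulAction (SL2 F) (Pts F i) where
  one_smul p := by
    induction p using Quot.ind with | _ v => ?_
    show Quot.mk _ (slVecSMul 1 v) = Quot.mk _ v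
    congr 1
    apply Subtype.ext
    show ((1 : SL2 F) : Matrix (Fin 2) (Fin 2) F) *ᵥ v.1 = v.1
    rw [Matrix.SpecialLinearGroup.coe_one, Matrix.one_mulVec]
  mul_smul A B p := by
    induction p using Quot.ind with | _ v => ?_
    show Quot.mk _ (slVecSMul (A * B) v) = Quot.mk _ (slVecSMul A (slVecSMul B v))
    congr 1
    apply Subtype.ext
    show ((A * B : SL2 F) : Matrix (Fin 2) (Fin 2) F) *ᵥ v.1 =
      (A : Matrix (Fin 2) (Fin 2) F) *ᵥ ((B : Matrix (Fin 2) (Fin 2) F) *ᵥ v.1)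
    rw [Matrix.SpecialLinearGroup.coe_mul, Matrix.mulVec_mulVec]

/-- The stabilizer in `PSL(2,q)` of a point of `P`, i.e. the image in the quotient
`PSL(2,q) = SL(2,q)/center` of the stabilizer in `SL(2,q)`. -/
def pslPtStab (F : Type) [Field F] (i : F) (p : Pts F i) : Subgroup (PSL2 F) :=
  (MulAction.stabilizer (SL2 F) p).map (QuotientGroup.mk' (Subgroup.center (SL2 F)))

/-- The setwise stabilizer in `PSL(2,q)` of a set of points of `P`. -/
def pslSetStab (F : Type) [Field F] (i : F) (s : Set (Pts F i)) : Subgroup (PSL2 F) :=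
  (MulAction.stabilizer (SL2 F) s).map (QuotientGroup.mk' (Subgroup.center (SL2 F)))


/-! ### Auxiliary material -/

section Aux

variable {F : Type} [Field F]

instance vecFinite [Finite F] : Finite (Vec F) := Subtype.finite

instance ptsFinite [Finite F] {i : F} : Finite (Pts F i) :=
  Finite.of_surjective (Quot.mk (vrel F i)) (fun q => Quot.exists_rep q)

instance sl2Finite [Finite F] : Finite (SL2 F) := Subtype.finite

variable {i : F}

lemma i_ne_zero (hi : i ^ 2 = -1) : i ≠ 0 := by
  intro h; rw [h] at hi; norm_num at hi

lemma i_pow_four (hi : i ^ 2 = -1) : i ^ 4 = 1 := by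
  have h : i ^ 4 = (i ^ 2) ^ 2 := by ring
  rw [h, hi]; ring

lemma orderOf_i (hneg : (-1 : F) ≠ 1) (hi : i ^ 2 = -1) : orderOf i = 4 := by
  have h := orderOf_eq_prime_pow (x := i) (p := 2) (n := 1)
    (by rw [pow_one, hi]; exact hneg) (by norm_num; exact i_pow_four hi)
  rw [h]; norm_num

lemma vrel_equivalence (hi : i ^ 2 = -1) : Equivalence (vrel F i) where
  refl v := ⟨0, by simp⟩
  symm := by
    rintro v w ⟨n, hn⟩
    refine ⟨3 * n, ?_⟩
    rw [hn, smul_smul, ← pow_add]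
    have h4 : i ^ (3 * n + n) = 1 := by
      have he : 3 * n + n = 4 * n := by ring
      rw [he, pow_mul, i_pow_four hi, one_pow]
    rw [h4, one_smul]
  trans := by
    rintro u v w ⟨m, hm⟩ ⟨n, hn⟩
    exact ⟨n + m, by rw [hn, hm, smul_smul, pow_add]⟩

lemma mk_eq_mk (hi : i ^ 2 = -1) {v w : Vec F} :
    Quot.mk (vrel F i) v = Quot.mk (vrel F i) w ↔ vrel F i v w := by
  rw [Quot.eq]
  exact (vrel_equivalence hi).eqvGen_iff

lemma mulVec_e0 (A : Matrix (Fin 2) (Fin 2) F) : A *ᵥ ![1, 0] = ![A 0 0, A 1 0] := by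
  funext j
  fin_cases j <;>
    simp [Matrix.mulVec, dotProduct, Fin.sum_univ_two]

/-- Transitivity. -/
lemma exists_smul_eq_pt (hi : i ^ 2 = -1) (x : Pts F i) :
    ∃ A : SL2 F, A • (mkPt F i ![1, 0] (vec_fst_ne_zero 0)) = x := by
  induction x using Quot.ind with | _ v => ?_
  by_cases ha : v.1 0 = 0
  · have hb : v.1 1 ≠ 0 := by
      intro hb; apply v.2; funext j; fin_cases j <;> simp [ha, hb]
    refine ⟨⟨!![0, -(v.1 1)⁻¹; v.1 1, 0], by
      simp [Matrix.det_fin_two_of, inv_mul_cancel₀ hb]⟩, ?_⟩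
    show Quot.mk _ (slVecSMul _ ⟨![1, 0], vec_fst_ne_zero 0⟩) = Quot.mk _ v
    congr 1
    apply Subtype.ext
    show _ *ᵥ ![1, 0] = v.1
    rw [mulVec_e0]
    funext j
    fin_cases j <;> simp [ha]
  · refine ⟨⟨!![v.1 0, 0; v.1 1, (v.1 0)⁻¹], by
      simp [Matrix.det_fin_two_of, mul_inv_cancel₀ ha]⟩, ?_⟩
    show Quot.mk _ (slVecSMul _ ⟨![1, 0], vec_fst_ne_zero 0⟩) = Quot.mk _ v
    congr 1
    apply Subtype.ext
    show _ *ᵥ ![1, 0] = v.1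
    rw [mulVec_e0]
    funext j
    fin_cases j <;> simp

section WithCard

variable [Fintype F]

/-- The vectors are the points times `Fin 4`. -/
noncomputable def ptsProdEquivVec (hneg : (-1 : F) ≠ 1) (hi : i ^ 2 = -1) :
    Pts F i × Fin 4 ≃ Vec F := by
  refine Equiv.ofBijective
    (fun pk => ⟨i ^ (pk.2 : ℕ) • (Quot.out pk.1).1,
      smul_ne_zero (pow_ne_zero _ (i_ne_zero hi)) (Quot.out pk.1).2⟩) ⟨?_, ?_⟩
  · rintro ⟨p, k⟩ ⟨p', k'⟩ h
    have h1 : i ^ (k : ℕ) • (Quot.out p).1 = i ^ (k' : ℕ) • (Quot.out p').1 :=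
      congrArg Subtype.val h
    have hpp : p = p' := by
      rw [← Quot.out_eq p, ← Quot.out_eq p']
      refine (mk_eq_mk hi).mpr ?_
      refine ⟨3 * (k' : ℕ) + (k : ℕ), ?_⟩
      have h4 : i ^ (3 * (k' : ℕ) + (k' : ℕ)) = 1 := by
        have he : 3 * (k' : ℕ) + (k' : ℕ) = 4 * (k' : ℕ) := by ring
        rw [he, pow_mul, i_pow_four hi, one_pow]
      rw [pow_add, ← smul_smul, h1, smul_smul, ← pow_add, h4, one_smul]
    subst hpp
    have h2 : i ^ (k : ℕ) = i ^ (k' : ℕ) :=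
      smul_left_injective F (Quot.out p).2 h1
    have hk : (k : ℕ) = (k' : ℕ) := by
      have := orderOf_i hneg hi
      refine pow_injOn_Iio_orderOf ?_ ?_ h2 <;>
        simp [this, Set.mem_Iio, Fin.is_lt]
    exact Prod.ext rfl (Fin.ext hk)
  · rintro ⟨w, hw⟩
    obtain ⟨n, hn⟩ : vrel F i (Quot.out (Quot.mk (vrel F i) ⟨w, hw⟩)) ⟨w, hw⟩ := by
      exact (mk_eq_mk hi).mp (Quot.out_eq _)
    refine ⟨⟨Quot.mk (vrel F i) ⟨w, hw⟩, ⟨n % 4, Nat.mod_lt _ (by norm_num)⟩⟩, ?_⟩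
    apply Subtype.ext
    show i ^ (n % 4) • _ = w
    have hmod : i ^ (n % 4) = i ^ n := by
      rw [← pow_mod_orderOf (x := i) (n := n), orderOf_i hneg hi]
    rw [hmod, ← hn]

lemma card_pts (hneg : (-1 : F) ≠ 1) (hi : i ^ 2 = -1) :
    Nat.card (Pts F i) * 4 = Fintype.card F ^ 2 - 1 := by
  classical
  have h1 : Nat.card (Vec F) = Fintype.card F ^ 2 - 1 := by
    have h0 : Nat.card (Vec F) = Nat.card {v : Fin 2 → F // ¬ v = 0} := rfl
    rw [h0, Nat.card_eq_fintype_card, Fintype.card_subtype_compl, Fintype.card_subtype_eq (0 : Fin 2 → F)]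
    congr 1
    rw [Fintype.card_fun]
    simp
  calc Nat.card (Pts F i) * 4
      = Nat.card (Pts F i × Fin 4) := by
        rw [Nat.card_prod, Nat.card_eq_fintype_card (α := Fin 4), Fintype.card_fin]
    _ = Nat.card (Vec F) := Nat.card_congr (ptsProdEquivVec hneg hi)
    _ = _ := h1

end WithCard

/-- The stabilizer of the base point. -/
noncomputable def stabEquiv (hneg : (-1 : F) ≠ 1) (hi : i ^ 2 = -1) :
    Fin 4 × F ≃ MulAction.stabilizer (SL2 F) (mkPt F i ![1, 0] (vec_fst_ne_zero 0)) := by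
  have hi0 : i ≠ 0 := i_ne_zero hi
  refine Equiv.ofBijective (fun kb =>
    ⟨⟨!![i ^ (kb.1 : ℕ), kb.2; 0, (i ^ (kb.1 : ℕ))⁻¹], by
        simp [Matrix.det_fin_two_of, mul_inv_cancel₀ (pow_ne_zero (kb.1 : ℕ) hi0)]⟩, ?_⟩)
    ⟨?_, ?_⟩
  · show _ • (mkPt F i ![1, 0] (vec_fst_ne_zero 0)) = mkPt F i ![1, 0] (vec_fst_ne_zero 0)
    show Quot.mk _ (slVecSMul _ ⟨![1, 0], vec_fst_ne_zero 0⟩) = Quot.mk _ _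
    refine (mk_eq_mk hi).mpr ?_
    refine ⟨3 * (kb.1 : ℕ), ?_⟩
    show (![1, 0] : Fin 2 → F) = _ • (_ *ᵥ ![1, 0])
    rw [mulVec_e0]
    have h4 : i ^ (3 * (kb.1 : ℕ)) * i ^ (kb.1 : ℕ) = 1 := by
      rw [← pow_add]
      have he : 3 * (kb.1 : ℕ) + (kb.1 : ℕ) = 4 * (kb.1 : ℕ) := by ring
      rw [he, pow_mul, i_pow_four hi, one_pow]
    funext j
    fin_cases j <;> simp [h4]
  · rintro ⟨k, b⟩ ⟨k', b'⟩ h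
    have hm : (!![i ^ (k : ℕ), b; 0, (i ^ (k : ℕ))⁻¹] : Matrix (Fin 2) (Fin 2) F) =
        !![i ^ (k' : ℕ), b'; 0, (i ^ (k' : ℕ))⁻¹] :=
      congrArg (fun x : MulAction.stabilizer (SL2 F) (mkPt F i ![1, 0] (vec_fst_ne_zero 0)) =>
        ((x : SL2 F) : Matrix (Fin 2) (Fin 2) F)) h
    have h00 : i ^ (k : ℕ) = i ^ (k' : ℕ) := by
      have := congrFun (congrFun hm 0) 0; simpa using this
    have h01 : b = b' := by
      have := congrFun (congrFun hm 0) 1; simpa using this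
    have hk : (k : ℕ) = (k' : ℕ) := by
      have ho := orderOf_i hneg hi
      refine pow_injOn_Iio_orderOf ?_ ?_ h00 <;>
        simp [ho, Set.mem_Iio, Fin.is_lt]
    exact Prod.ext (Fin.ext hk) h01
  · rintro ⟨A, hA⟩
    have hA' : Quot.mk _ (slVecSMul A ⟨![1, 0], vec_fst_ne_zero 0⟩) =
        Quot.mk (vrel F i) ⟨![1, 0], vec_fst_ne_zero 0⟩ := hA
    replace hA' := (mk_eq_mk hi).mp hA'
    obtain ⟨n, hn⟩ := hA'
    have hn' : (![1, 0] : Fin 2 → F) = i ^ n • ![A.1 0 0, A.1 1 0] := by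
      rw [← mulVec_e0]; exact hn
    have h0 : (1 : F) = i ^ n * A.1 0 0 := by
      have := congrFun hn' 0; simpa using this
    have h1 : (0 : F) = i ^ n * A.1 1 0 := by
      have := congrFun hn' 1; simpa using this
    have hA10 : A.1 1 0 = 0 := by
      rcases mul_eq_zero.mp h1.symm with h | h
      · exact absurd h (pow_ne_zero n hi0)
      · exact h
    have h4n : i ^ (3 * n) * i ^ n = 1 := by
      rw [← pow_add]
      have he : 3 * n + n = 4 * n := by ring
      rw [he, pow_mul, i_pow_four hi, one_pow]
    have hA00 : A.1 0 0 = i ^ (3 * n) := by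
      have : i ^ (3 * n) * (i ^ n * A.1 0 0) = i ^ (3 * n) := by rw [← h0, mul_one]
      rw [← mul_assoc, h4n, one_mul] at this
      exact this
    have hdet : A.1 0 0 * A.1 1 1 - A.1 0 1 * A.1 1 0 = 1 := by
      rw [← Matrix.det_fin_two]; exact A.2
    rw [hA10, mul_zero, sub_zero] at hdet
    have hA11 : A.1 1 1 = (i ^ (3 * n))⁻¹ := by
      rw [← hA00]
      exact (inv_eq_of_mul_eq_one_right hdet).symm
    refine ⟨(⟨3 * n % 4, Nat.mod_lt _ (by norm_num)⟩, A.1 0 1), ?_⟩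
    have hmod : i ^ (3 * n % 4) = i ^ (3 * n) := by
      rw [← pow_mod_orderOf (x := i) (n := 3 * n), orderOf_i hneg hi]
    apply Subtype.ext
    apply Subtype.ext
    show (!![i ^ (3 * n % 4), A.1 0 1; 0, (i ^ (3 * n % 4))⁻¹] : Matrix (Fin 2) (Fin 2) F)
      = A.1
    rw [hmod]
    funext j l
    fin_cases j <;> fin_cases l <;> simp [hA00, hA10, hA11]

/-- `-1` as an element of `SL2`. -/
def negOneSL : SL2 F := ⟨-1, by simp [Matrix.det_neg]⟩

lemma negOneSL_ne_one (hneg : (-1 : F) ≠ 1) : (negOneSL : SL2 F) ≠ 1 := by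
  intro h
  have hm : ((-1 : Matrix (Fin 2) (Fin 2) F)) = 1 := congrArg Subtype.val h
  have := congrFun (congrFun hm 0) 0
  simp at this
  exact hneg this

lemma mem_center_iff' (hneg : (-1 : F) ≠ 1) {A : SL2 F} :
    A ∈ Subgroup.center (SL2 F) ↔ A = 1 ∨ A = negOneSL := by
  constructor
  · intro h
    obtain ⟨r, hr, hrA⟩ := Matrix.SpecialLinearGroup.mem_center_iff.mp h
    rw [Fintype.card_fin] at hr
    have hr2 : r * r = 1 := by rw [← sq]; exact hr
    rcases mul_self_eq_one_iff.mp hr2 with h1 | h1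
    · left
      apply Subtype.ext
      rw [← hrA, h1]
      simp [Matrix.scalar_apply]
    · right
      apply Subtype.ext
      rw [← hrA, h1]
      show _ = (-1 : Matrix (Fin 2) (Fin 2) F)
      simp [Matrix.scalar_apply]
      ext j l
      by_cases hjl : j = l <;> simp [Matrix.diagonal, hjl, Matrix.one_apply]
  · rintro (rfl | rfl)
    · exact Subgroup.one_mem _
    · apply Subgroup.mem_center_iff.mpr
      intro B
      apply Subtype.ext
      show B.1 * (-1) = (-1) * B.1
      simp
lemma negOneSL_mem_stab (hi : i ^ 2 = -1) :
    (negOneSL : SL2 F) ∈ MulAction.stabilizer (SL2 F) (mkPt F i ![1, 0] (vec_fst_ne_zero 0)) := by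
  show Quot.mk _ (slVecSMul _ ⟨![1, 0], vec_fst_ne_zero 0⟩) = Quot.mk _ _
  refine (mk_eq_mk hi).mpr ?_
  refine ⟨2, ?_⟩
  show (![1, 0] : Fin 2 → F) = i ^ 2 • (((-1 : Matrix (Fin 2) (Fin 2) F)) *ᵥ ![1, 0])
  rw [hi]
  funext j
  fin_cases j <;> simp [Matrix.mulVec, dotProduct, Fin.sum_univ_two]

end Aux

/-- The stabilizer of `[(1,0)]` in `PSL(2,q)` has order `2q`, the orbit of `[(1,0)]`
has size `(q²-1)/4`, and the action on `P` is transitive. -/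
theorem stmt_4 (q : ℕ) (F : Type) [Field F] [Fintype F]
    (hcard : Fintype.card F = q) (hq : q % 4 = 1)
    (i : F) (hi : i ^ 2 = -1) :
    Nat.card (pslPtStab F i (mkPt F i ![1, 0] (vec_fst_ne_zero 0))) = 2 * q ∧
    Nat.card (MulAction.orbit (SL2 F) (mkPt F i ![1, 0] (vec_fst_ne_zero 0))) = (q ^ 2 - 1) / 4 ∧
    ∀ x : Pts F i, ∃ A : SL2 F, A • (mkPt F i ![1, 0] (vec_fst_ne_zero 0)) = x := by
  classical
  have hneg : (-1 : F) ≠ 1 := by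
    apply Ring.neg_one_ne_one_of_char_ne_two
    intro h
    have h2 := (FiniteField.even_card_iff_char_two (F := F)).mp h
    omega
  have htrans := exists_smul_eq_pt (F := F) hi
  set p₀ := mkPt F i ![1, 0] (vec_fst_ne_zero 0) with hp₀
  have hPts : Nat.card (Pts F i) * 4 = q ^ 2 - 1 := by
    rw [← hcard]; exact card_pts hneg hi
  have horb : MulAction.orbit (SL2 F) p₀ = Set.univ :=
    Set.eq_univ_iff_forall.mpr fun x => MulAction.mem_orbit_iff.mpr (htrans x)
  have hcardOrb : Nat.card (MulAction.orbit (SL2 F) p₀) = (q ^ 2 - 1) / 4 := by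
    rw [horb]
    have h2 : Nat.card (Set.univ : Set (Pts F i)) = Nat.card (Pts F i) :=
      Nat.card_congr (Equiv.Set.univ _)
    rw [h2]
    omega
  set S := MulAction.stabilizer (SL2 F) p₀ with hSdef
  have hS : Nat.card S = 4 * q := by
    rw [← Nat.card_congr (stabEquiv hneg hi), Nat.card_prod,
      Nat.card_eq_fintype_card (α := Fin 4), Fintype.card_fin,
      Nat.card_eq_fintype_card (α := F), hcard]
  set f : S →* PSL2 F := (QuotientGroup.mk' (Subgroup.center (SL2 F))).comp S.subtype with hf
  have hker : ∀ s : S, s ∈ f.ker ↔ (s : SL2 F) ∈ Subgroup.center (SL2 F) := by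
    intro s
    rw [MonoidHom.mem_ker]
    exact QuotientGroup.eq_one_iff _
  have hmemker : (⟨negOneSL, negOneSL_mem_stab hi⟩ : S) ∈ f.ker :=
    (hker _).mpr ((mem_center_iff' hneg).mpr (Or.inr rfl))
  have hkerCard : Nat.card f.ker = 2 := by
    have e : Bool ≃ f.ker := by
      refine Equiv.ofBijective
        (fun b => Bool.rec (⟨1, f.ker.one_mem⟩ : f.ker)
          (⟨⟨negOneSL, negOneSL_mem_stab hi⟩, hmemker⟩ : f.ker) b) ⟨?_, ?_⟩
      · rintro (_ | _) (_ | _) h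
        · rfl
        · exfalso
          have h2 : (1 : SL2 F) = negOneSL :=
            congrArg (fun x : f.ker => ((x : S) : SL2 F)) h
          exact negOneSL_ne_one hneg h2.symm
        · exfalso
          have h2 : (negOneSL : SL2 F) = 1 :=
            congrArg (fun x : f.ker => ((x : S) : SL2 F)) h
          exact negOneSL_ne_one hneg h2
        · rfl
      · rintro ⟨s, hs⟩
        rcases (mem_center_iff' hneg).mp ((hker s).mp hs) with h1 | h1
        · exact ⟨false, by apply Subtype.ext; apply Subtype.ext; exact h1.symm⟩
        · exact ⟨true, by apply Subtype.ext; apply Subtype.ext; exact h1.symm⟩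
    rw [← Nat.card_congr e, Nat.card_eq_fintype_card]
    exact Fintype.card_bool
  have hquot : Nat.card S = Nat.card (S ⧸ f.ker) * Nat.card f.ker :=
    Subgroup.card_eq_card_quotient_mul_card_subgroup f.ker
  have hrange : Nat.card (pslPtStab F i p₀) = Nat.card (S ⧸ f.ker) := by
    have h1 : pslPtStab F i p₀ = f.range := by
      rw [hf, MonoidHom.range_comp, Subgroup.range_subtype]
      rfl
    rw [h1]
    exact (Nat.card_congr (QuotientGroup.quotientKerEquivRange f).toEquiv).symm
  rw [hkerCard] at hquot
  refine ⟨?_, hcardOrb, htrans⟩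
  rw [hrange]
  omega
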